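/- arXiv:1907.08826 — 3 statements merged into one kernel-verified Lean document; each statement's English description precedes it below -/
import Mathlib

section
/- Let (X, Σ, μ) be a σ-finite measure space and let W be a bounded linear operator on L²(μ) such that W*W = M_J, the multiplication operator by a nonnegative measurable function J. If there is a constant c > 0 with J ≥ c almost everywhere on the set Coz J = {x : J(x) ≠ 0}, then W has closed range. -/
open MeasureTheory

/-- If `W` is bounded on `L²(μ)`, `W*W` is multiplication by a nonnegative `J`, and
`J ≥ c > 0` a.e. on the cozero set of `J`, then `W` has closed range. -/
theorem closed_range_of_bounded_below_on_cozero
    {X : Type*} [MeasurableSpace X] {μ : Measure X} [SigmaFinite μ]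
    (W : Lp ℂ 2 μ →L[ℂ] Lp ℂ 2 μ)
    (J : X → ℝ) (hJmeas : Measurable J) (hJnn : ∀ x, 0 ≤ J x)
    (hWW : ∀ f : Lp ℂ 2 μ,
      ((ContinuousLinearMap.adjoint W) (W f) : X → ℂ) =ᵐ[μ] fun x => (J x : ℂ) * f x)
    (c : ℝ) (hc : 0 < c)
    (hbound : ∀ᵐ x ∂(μ.restrict {x | J x ≠ 0}), c ≤ J x) :
    IsClosed (Set.range W) := by
  classical
  set S : Set X := {x | J x ≠ 0} with hSdef
  have hS : MeasurableSet S := (hJmeas (measurableSet_singleton (0 : ℝ))).compl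
  have hbound' : ∀ᵐ x ∂μ, x ∈ S → c ≤ J x := (ae_restrict_iff' hS).mp hbound
  -- the projection `Q` : multiplication by the indicator of `S`
  let Qlin : Lp ℂ 2 μ →ₗ[ℂ] Lp ℂ 2 μ :=
    { toFun := fun f => ((Lp.memLp f).indicator hS).toLp (S.indicator f)
      map_add' := by
        intro f g
        rw [← MemLp.toLp_add]
        refine MemLp.toLp_congr _ _ ?_
        filter_upwards [Lp.coeFn_add f g] with x hx
        by_cases hxS : x ∈ S
        · simp only [Pi.add_apply, Set.indicator_of_mem hxS]
          exact hx
        · simp only [Pi.add_apply, Set.indicator_of_notMem hxS]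
          simp
      map_smul' := by
        intro a f
        simp only [RingHom.id_apply]
        rw [← MemLp.toLp_const_smul (E := ℂ) (p := 2) (μ := μ) (𝕜 := ℂ) a ((Lp.memLp f).indicator hS)]
        refine MemLp.toLp_congr _ _ ?_
        filter_upwards [Lp.coeFn_smul a f] with x hx
        by_cases hxS : x ∈ S
        · simp only [Pi.smul_apply, Set.indicator_of_mem hxS]
          exact hx
        · simp only [Pi.smul_apply, Set.indicator_of_notMem hxS]
          simp
      }
  have hQlinbd : ∀ f : Lp ℂ 2 μ, ‖Qlin f‖ ≤ 1 * ‖f‖ := by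
    intro f
    have : ‖Qlin f‖ = (eLpNorm (S.indicator (f : X → ℂ)) 2 μ).toReal :=
      Lp.norm_toLp (E := ℂ) (p := 2) (μ := μ) _ ((Lp.memLp f).indicator hS)
    rw [this, one_mul, Lp.norm_def]
    exact ENNReal.toReal_mono (Lp.eLpNorm_ne_top f) (eLpNorm_indicator_le _)
  let Q : Lp ℂ 2 μ →L[ℂ] Lp ℂ 2 μ := Qlin.mkContinuous 1 hQlinbd
  have hQcoe : ∀ f : Lp ℂ 2 μ, (Q f : X → ℂ) =ᵐ[μ] S.indicator f := by
    intro f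
    exact MemLp.coeFn_toLp (E := ℂ) (p := 2) (μ := μ) ((Lp.memLp f).indicator hS)
  -- idempotence
  have hQQ : ∀ f : Lp ℂ 2 μ, Q (Q f) = Q f := by
    intro f
    apply Lp.ext
    filter_upwards [hQcoe (Q f), (hQcoe f).indicator (s := S), hQcoe f] with x h1 h2 h3
    rw [h1, h2, Set.indicator_indicator, Set.inter_self, h3]
  -- the key identity for the quadratic form
  have hA : ∀ f : Lp ℂ 2 μ,
      (inner ℂ (W f) (W f) : ℂ) =
        ∫ x, (starRingEnd ℂ) (f x) * ((J x : ℂ) * f x) ∂μ := by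
    intro f
    rw [← ContinuousLinearMap.adjoint_inner_right W f (W f), L2.inner_def]
    refine integral_congr_ae ?_
    filter_upwards [hWW f] with x hx
    rw [RCLike.inner_apply', hx]
  -- (1) `W f = W (Q f)`
  have hker : ∀ f : Lp ℂ 2 μ, W f = W (Q f) := by
    intro f
    have h0 : W (f - Q f) = 0 := by
      rw [← inner_self_eq_zero (𝕜 := ℂ), hA]
      apply integral_eq_zero_of_ae
      filter_upwards [Lp.coeFn_sub f (Q f), hQcoe f] with x h1 h2
      by_cases hxS : x ∈ S
      · have hz : (↑↑(f - Q f) : X → ℂ) x = 0 := by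
          rw [h1, Pi.sub_apply, h2, Set.indicator_of_mem hxS, sub_self]
        rw [hz]
        simp
      · have : J x = 0 := by simpa [hSdef] using hxS
        simp [this]
    have := map_sub W f (Q f)
    rw [h0] at this
    exact (sub_eq_zero.mp this.symm)
  -- (2) `W` is bounded below on the range of `Q`
  have hbelow : ∀ m : Lp ℂ 2 μ, Q m = m → c * ‖m‖ ^ 2 ≤ ‖W m‖ ^ 2 := by
    intro m hm
    have hmind : (m : X → ℂ) =ᵐ[μ] S.indicator m := by
      conv_lhs => rw [← hm]
      exact hQcoe m
    -- integrability facts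
    have hint1 : Integrable (fun x => (starRingEnd ℂ) (m x) * ((J x : ℂ) * m x)) μ := by
      refine (L2.integrable_inner (𝕜 := ℂ) m ((ContinuousLinearMap.adjoint W) (W m))).congr ?_
      filter_upwards [hWW m] with x hx
      rw [RCLike.inner_apply', hx]
    have hint2 : Integrable (fun x => (starRingEnd ℂ) (m x) * m x) μ := by
      simpa only [RCLike.inner_apply'] using (L2.integrable_inner (𝕜 := ℂ) m m)
    -- norm of `W m` as an integral
    have hWm : ‖W m‖ ^ 2 = ∫ x, ((starRingEnd ℂ) (m x) * ((J x : ℂ) * m x)).re ∂μ := by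
      rw [← inner_self_eq_norm_sq (𝕜 := ℂ) (W m), hA m, ← integral_re hint1]
      rfl
    have hm2 : ‖m‖ ^ 2 = ∫ x, ((starRingEnd ℂ) (m x) * m x).re ∂μ := by
      rw [← inner_self_eq_norm_sq (𝕜 := ℂ) m, L2.inner_def, ← integral_re (L2.integrable_inner m m)]
      · refine (integral_congr_ae ?_).symm
        filter_upwards with x
        rw [RCLike.inner_apply']
        rfl
    rw [hWm, hm2, ← integral_const_mul]
    refine integral_mono_ae (hint2.re.const_mul c) hint1.re ?_
    filter_upwards [hbound', hmind] with x hb hx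
    have e1 : ((starRingEnd ℂ) (m x) * m x).re = Complex.normSq ((m : X → ℂ) x) := by
      simp [Complex.normSq_apply, Complex.mul_re]
    have e2 : ((starRingEnd ℂ) (m x) * ((J x : ℂ) * m x)).re
        = J x * Complex.normSq ((m : X → ℂ) x) := by
      simp [Complex.normSq_apply, Complex.mul_re, Complex.mul_im]
      ring
    rw [e1, e2]
    by_cases hxS : x ∈ S
    · have := hb hxS
      nlinarith [Complex.normSq_nonneg ((m : X → ℂ) x)]
    · have : (m : X → ℂ) x = 0 := by rw [hx, Set.indicator_of_notMem hxS]
      simp [this]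
  -- assemble: restrict `W` to the closed subspace `M = ker (id - Q)`
  set M : Submodule ℂ (Lp ℂ 2 μ) :=
    LinearMap.ker (((ContinuousLinearMap.id ℂ (Lp ℂ 2 μ)) - Q : Lp ℂ 2 μ →L[ℂ] Lp ℂ 2 μ) : Lp ℂ 2 μ →ₗ[ℂ] Lp ℂ 2 μ) with hMdef
  have hMclosed : IsClosed (M : Set (Lp ℂ 2 μ)) :=
    ContinuousLinearMap.isClosed_ker _
  haveI : CompleteSpace M := hMclosed.completeSpace_coe
  have hmem_iff : ∀ m : Lp ℂ 2 μ, m ∈ M ↔ Q m = m := by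
    intro m
    rw [hMdef, LinearMap.mem_ker]
    constructor
    · intro h
      have : m - Q m = 0 := by simpa using h
      exact (sub_eq_zero.mp this).symm
    · intro h
      simp [h]
  let T : M →L[ℂ] Lp ℂ 2 μ := W.comp M.subtypeL
  have hrange : Set.range W = Set.range T := by
    ext y
    constructor
    · rintro ⟨f, rfl⟩
      refine ⟨⟨Q f, (hmem_iff (Q f)).mpr (hQQ f)⟩, ?_⟩
      show W (Q f) = W f
      exact (hker f).symm
    · rintro ⟨m, rfl⟩
      exact ⟨(m : Lp ℂ 2 μ), rfl⟩
  rw [hrange]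
  have hcs : 0 < Real.sqrt c := Real.sqrt_pos.mpr hc
  have hbd : ∀ m : M, ‖m‖ ≤ ((⟨(Real.sqrt c)⁻¹, by positivity⟩ : NNReal) : ℝ) * ‖T m‖ := by
    intro m
    have h1 : c * ‖(m : Lp ℂ 2 μ)‖ ^ 2 ≤ ‖W (m : Lp ℂ 2 μ)‖ ^ 2 :=
      hbelow _ ((hmem_iff _).mp m.2)
    have hnm : ‖m‖ = ‖(m : Lp ℂ 2 μ)‖ := rfl
    have hTm : ‖T m‖ = ‖W (m : Lp ℂ 2 μ)‖ := rfl
    rw [hnm, hTm, inv_mul_eq_div, le_div_iff₀ hcs]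
    nlinarith [Real.sq_sqrt hc.le, norm_nonneg (m : Lp ℂ 2 μ),
      norm_nonneg (W (m : Lp ℂ 2 μ)), Real.sqrt_nonneg c]
  exact (T.antilipschitz_of_bound hbd).isClosed_range T.uniformContinuous
end

section
/- Let (X, Σ, μ) be a σ-finite measure space and let W be a bounded linear operator on L²(μ) with W*W = M_J for some nonnegative measurable J, and suppose ker W = {f ∈ L²(μ) : f = 0 a.e. on Coz J}. If W has closed range, then there exists a constant c > 0 such that J ≥ c almost everywhere on Coz J. -/
open MeasureTheory

section Aux
open ContinuousLinearMap


lemma bounded_below_aux {H : Type*} [NormedAddCommGroup H] [InnerProductSpace ℂ H]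
    [CompleteSpace H] (W : H →L[ℂ] H) (hclosed : IsClosed (Set.range W)) :
    ∃ c : ℝ, 0 < c ∧ ∀ x ∈ (LinearMap.ker (W : H →ₗ[ℂ] H))ᗮ, c * ‖x‖ ≤ ‖W x‖ := by
  set K : Submodule ℂ H := LinearMap.ker (W : H →ₗ[ℂ] H) with hK
  have hKc : IsClosed (K : Set H) := isClosed_ker W
  haveI : CompleteSpace K := hKc.completeSpace_coe
  haveI : CompleteSpace Kᗮ := (Submodule.isClosed_orthogonal K).completeSpace_coe
  set T : Kᗮ →L[ℂ] H := W.comp (Kᗮ.subtypeL) with hT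
  have hrange : Set.range T = Set.range W := by
    apply Set.Subset.antisymm
    · rintro _ ⟨x, rfl⟩; exact ⟨x, rfl⟩
    · rintro _ ⟨x, rfl⟩
      obtain ⟨y, hy, z, hz, rfl⟩ := K.exists_add_mem_mem_orthogonal x
      refine ⟨⟨z, hz⟩, ?_⟩
      have hy0 : W y = 0 := LinearMap.mem_ker.mp hy
      simp [hT, map_add, hy0]
  set Y : Submodule ℂ H := LinearMap.range (T : Kᗮ →ₗ[ℂ] H) with hY
  have hYc : IsClosed (Y : Set H) := by
    have : (Y : Set H) = Set.range T := by
      ext x; simp [hY, LinearMap.mem_range]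
    rw [this, hrange]; exact hclosed
  haveI : CompleteSpace Y := hYc.completeSpace_coe
  set T' : Kᗮ →L[ℂ] Y := T.codRestrict Y (fun x => LinearMap.mem_range_self _ x) with hT'
  have hinj : LinearMap.ker (T' : Kᗮ →ₗ[ℂ] Y) = ⊥ := by
    rw [Submodule.eq_bot_iff]
    rintro ⟨x, hx⟩ hmem
    have hx0 : W x = 0 := by
      have := LinearMap.mem_ker.mp hmem
      have h2 : T ⟨x, hx⟩ = 0 := by
        have := congrArg (Subtype.val) this
        simpa [hT'] using this
      simpa [hT] using h2
    have hxK : x ∈ K := LinearMap.mem_ker.mpr hx0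
    have : x = 0 := by
      have := Submodule.inner_right_of_mem_orthogonal hxK hx
      simpa using inner_self_eq_zero.mp this
    simp [this]
  have hsurj : LinearMap.range (T' : Kᗮ →ₗ[ℂ] Y) = ⊤ := by
    rw [Submodule.eq_top_iff']
    rintro ⟨y, hy⟩
    obtain ⟨x, hx⟩ := LinearMap.mem_range.mp hy
    exact ⟨x, by ext; simpa [hT'] using hx⟩
  set e := ContinuousLinearEquiv.ofBijective T' hinj hsurj with he
  have hc := e.antilipschitz
  set c := ‖(e.symm : Y →L[ℂ] Kᗮ)‖₊ with hcdef
  refine ⟨((c:ℝ) + 1)⁻¹, by positivity, fun x hx => ?_⟩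
  have h1 : ‖(⟨x, hx⟩ : Kᗮ)‖ ≤ ((c:ℝ) + 1) * ‖e ⟨x, hx⟩‖ := by
    have := hc.le_mul_dist ⟨x, hx⟩ 0
    simp only [dist_zero_right, map_zero] at this
    calc ‖(⟨x, hx⟩ : Kᗮ)‖ ≤ c * ‖e ⟨x, hx⟩‖ := this
      _ ≤ ((c:ℝ) + 1) * ‖e ⟨x, hx⟩‖ := by
        apply mul_le_mul_of_nonneg_right _ (norm_nonneg _)
        linarith
  have h2 : ‖e ⟨x, hx⟩‖ = ‖W x‖ := by
    have : ((e ⟨x, hx⟩ : Y) : H) = W x := by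
      rw [he]; simp [ContinuousLinearEquiv.ofBijective, hT', hT]
    rw [← this]; rfl
  rw [h2] at h1
  rw [inv_mul_le_iff₀ (by positivity)]
  calc ‖x‖ = ‖(⟨x, hx⟩ : Kᗮ)‖ := rfl
    _ ≤ ((c:ℝ) + 1) * ‖W x‖ := h1

end Aux

/-- If `W*W = M_J`, `ker W` consists exactly of the functions vanishing a.e. on `Coz J`,
and `W` has closed range, then `J` is bounded below by some `c > 0` a.e. on `Coz J`. -/
theorem bounded_below_on_cozero_of_closed_range
    {X : Type*} [MeasurableSpace X] {μ : Measure X} [SigmaFinite μ]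
    (W : Lp ℂ 2 μ →L[ℂ] Lp ℂ 2 μ)
    (J : X → ℝ) (hJmeas : Measurable J) (hJnn : ∀ x, 0 ≤ J x)
    (hWW : ∀ f : Lp ℂ 2 μ,
      ((ContinuousLinearMap.adjoint W) (W f) : X → ℂ) =ᵐ[μ] fun x => (J x : ℂ) * f x)
    (hker : ∀ f : Lp ℂ 2 μ, W f = 0 ↔ (f : X → ℂ) =ᵐ[μ.restrict {x | J x ≠ 0}] 0)
    (hclosed : IsClosed (Set.range W)) :
    ∃ c : ℝ, 0 < c ∧ ∀ᵐ x ∂(μ.restrict {x | J x ≠ 0}), c ≤ J x := by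
  obtain ⟨c₀, hc₀, hlow⟩ := bounded_below_aux W hclosed
  set S : Set X := {x | J x ≠ 0} with hSdef
  have hS : MeasurableSet S := (hJmeas (measurableSet_singleton 0)).compl
  set c : ℝ := c₀ ^ 2 / 2 with hcdef
  refine ⟨c, by positivity, ?_⟩
  by_contra hcon
  -- extract a finite-measure positive set where J < c
  set A : Set X := {x | J x < c} with hAdef
  have hA : MeasurableSet A := hJmeas measurableSet_Iio
  have hpos : 0 < μ (A ∩ S) := by
    rw [← Measure.restrict_apply hA]
    rcases eq_or_ne (μ.restrict S A) 0 with h | h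
    · exfalso; apply hcon
      filter_upwards [measure_eq_zero_iff_ae_notMem.mp h] with x hx
      simpa [hAdef, not_lt] using hx
    · exact h.bot_lt
  obtain ⟨A', hA'meas, hA'sub, hA'pos, hA'fin⟩ :=
    Measure.exists_subset_measure_lt_top (hA.inter hS) hpos
  set f : Lp ℂ 2 μ := indicatorConstLp 2 hA'meas hA'fin.ne (1 : ℂ) with hfdef
  have hf := indicatorConstLp_coeFn (p := 2) (hs := hA'meas) (hμs := hA'fin.ne) (c := (1:ℂ))
  -- f is orthogonal to ker W
  have hforth : f ∈ (LinearMap.ker (W : Lp ℂ 2 μ →ₗ[ℂ] Lp ℂ 2 μ))ᗮ := by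
    rw [Submodule.mem_orthogonal]
    intro g hg
    have hg0 : W g = 0 := LinearMap.mem_ker.mp hg
    have hgae : ∀ᵐ x ∂μ, x ∈ S → (g : X → ℂ) x = 0 :=
      (ae_restrict_iff' hS).mp ((hker g).mp hg0)
    have hzero : (fun x => (inner ℂ ((g : X → ℂ) x) ((f : X → ℂ) x) : ℂ)) =ᵐ[μ] 0 := by
      filter_upwards [hgae, hf] with x hgx hfx
      by_cases hxS : x ∈ S
      · simp [hgx hxS]
      · have hxA' : x ∉ A' := fun h => hxS (hA'sub h).2
        simp [hfdef, hfx, Set.indicator_of_notMem hxA']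
    rw [L2.inner_def, integral_congr_ae hzero]
    simp
  have hmain := hlow f hforth
  -- compute ‖W f‖ ^ 2
  have hWf : ‖W f‖ ^ 2 = ∫ x in A', J x ∂μ := by
    have h1 : (‖W f‖ : ℝ) ^ 2 = RCLike.re (inner ℂ (W f) (W f) : ℂ) := by
      rw [@inner_self_eq_norm_sq ℂ]
    have h2 : (inner ℂ (W f) (W f) : ℂ) = inner ℂ ((ContinuousLinearMap.adjoint W) (W f)) f :=
      (ContinuousLinearMap.adjoint_inner_left W f (W f)).symm
    have h3 : (inner ℂ ((ContinuousLinearMap.adjoint W) (W f)) f : ℂ)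
        = ∫ x, inner ℂ (((ContinuousLinearMap.adjoint W) (W f) : X → ℂ) x) ((f : X → ℂ) x) ∂μ :=
      L2.inner_def _ _
    have h4 : (fun x => (inner ℂ (((ContinuousLinearMap.adjoint W) (W f) : X → ℂ) x)
          ((f : X → ℂ) x) : ℂ))
        =ᵐ[μ] fun x => A'.indicator (fun y => ((J y : ℝ) : ℂ)) x := by
      filter_upwards [hWW f, hf] with x hWx hfx
      rw [hWx, hfx]
      by_cases hxA' : x ∈ A'
      · simp [Set.indicator_of_mem hxA', RCLike.inner_apply, Complex.conj_ofReal]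
      · simp [Set.indicator_of_notMem hxA', RCLike.inner_apply]
    have h5 : ∫ x, A'.indicator (fun y => ((J y : ℝ) : ℂ)) x ∂μ
        = ((∫ x in A', J x ∂μ : ℝ) : ℂ) := by
      rw [integral_indicator hA'meas]
      exact integral_ofReal (𝕜 := ℂ)
    rw [h1, h2, h3, integral_congr_ae h4, h5]
    simp
  -- bound the integral
  have hIntJ : IntegrableOn J A' μ := by
    apply Measure.integrableOn_of_bounded hA'fin.ne hJmeas.aestronglyMeasurable (M := c)
    filter_upwards [(ae_restrict_iff' hA'meas).mpr
      (ae_of_all _ (fun x hx => le_of_lt (show J x < c from (hA'sub hx).1)))] with x hx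
    rw [Real.norm_eq_abs, abs_of_nonneg (hJnn x)]; exact hx
  have hbound : ∫ x in A', J x ∂μ ≤ c * (μ A').toReal := by
    calc ∫ x in A', J x ∂μ ≤ ∫ _ in A', c ∂μ := by
          apply setIntegral_mono_on hIntJ (integrableOn_const hA'fin.ne) hA'meas
          exact fun x hx => le_of_lt (show J x < c from (hA'sub hx).1)
      _ = (μ A').toReal * c := by rw [setIntegral_const, smul_eq_mul]; rfl
      _ = c * (μ A').toReal := mul_comm _ _
  -- compute ‖f‖ ^ 2
  have hm : (0:ℝ) < (μ A').toReal := ENNReal.toReal_pos hA'pos.ne' hA'fin.ne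
  have hnf : ‖f‖ ^ 2 = (μ A').toReal := by
    rw [hfdef, norm_indicatorConstLp (by norm_num) (by norm_num)]
    rw [norm_one, one_mul]
    rw [← Real.rpow_natCast (μ.real A' ^ (1 / ENNReal.toReal 2)) 2,
      ← Real.rpow_mul measureReal_nonneg]
    norm_num [Measure.real]
  -- conclude
  have hsq : (c₀ * ‖f‖) ^ 2 ≤ ‖W f‖ ^ 2 := by
    have h0 : (0:ℝ) ≤ c₀ * ‖f‖ := by positivity
    nlinarith [mul_le_mul hmain hmain h0 (norm_nonneg (W f))]
  rw [mul_pow, hnf, hWf] at hsq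
  have := hsq.trans hbound
  rw [hcdef] at this
  nlinarith [mul_pos (show (0:ℝ) < c₀ ^ 2 / 2 by positivity) hm]
end

section
/- Let μ(X) < ∞ and 1 ≤ p < ∞. Let u_1, …, u_n be nonnegative measurable functions and W = Σ_{i=1}^n u_i C_{φ_i} a bounded operator from L^p(μ) into L^∞(μ). If W has closed range and is injective, then there exists δ > 0 such that Σ_{i=1}^n u_i^p ≥ δ almost everywhere on X. -/
open MeasureTheory ENNReal

set_option maxHeartbeats 2000000

/-- On a "0-or-full" finite measure, every measurable real function is a.e. constant. -/
lemma ae_eq_const_of_zero_or_full {X : Type*} [MeasurableSpace X] (ν : Measure X)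
    [IsFiniteMeasure ν]
    (hdich : ∀ T : Set X, MeasurableSet T → ν T = 0 ∨ ν T = ν Set.univ)
    (hν : ν Set.univ ≠ 0) (g : X → ℝ) (hg : Measurable g) :
    ∃ c : ℝ, g =ᵐ[ν] fun _ => c := by
  set v := ν Set.univ with hv
  set S : Set ℝ := {t : ℝ | ν {x | g x ≤ t} = v} with hS
  -- S is nonempty
  have hSne : S.Nonempty := by
    by_contra h
    have h0 : ∀ k : ℕ, ν {x | g x ≤ (k : ℝ)} = 0 := by
      intro k
      rcases hdich _ (hg measurableSet_Iic) with h' | h'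
      · exact h'
      · exact absurd ⟨(k : ℝ), h'⟩ h
    have hcover : (Set.univ : Set X) ⊆ ⋃ k : ℕ, {x | g x ≤ (k : ℝ)} := by
      intro x _
      rcases exists_nat_ge (g x) with ⟨k, hk⟩
      exact Set.mem_iUnion.2 ⟨k, hk⟩
    have : v ≤ 0 := by
      calc v = ν Set.univ := rfl
        _ ≤ ν (⋃ k : ℕ, {x | g x ≤ (k : ℝ)}) := measure_mono hcover
        _ ≤ ∑' k : ℕ, ν {x | g x ≤ (k : ℝ)} := measure_iUnion_le _
        _ = 0 := by simp [h0]
    exact hν (le_antisymm this zero_le)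
  -- S is bounded below
  have hals : ∀ t : ℝ, t ∉ S → ν {x | g x ≤ t} = 0 := by
    intro t ht
    rcases hdich _ (hg measurableSet_Iic) with h' | h'
    · exact h'
    · exact absurd h' ht
  have hSbdd : BddBelow S := by
    obtain ⟨k₀, hk₀⟩ : ∃ k : ℕ, ν {x | g x ≤ -(k : ℝ)} = 0 := by
      by_contra h
      push_neg at h
      have hfull : ∀ k : ℕ, ν {x | g x ≤ -(k : ℝ)} = v := by
        intro k
        rcases hdich _ (hg measurableSet_Iic) with h' | h'
        · exact absurd h' (h k)
        · exact h'
      have hempty : (⋂ k : ℕ, {x | g x ≤ -(k : ℝ)}) = (∅ : Set X) := by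
        ext x
        simp only [Set.mem_iInter, Set.mem_setOf_eq, Set.mem_empty_iff_false, iff_false]
        push_neg
        rcases exists_nat_gt (-(g x)) with ⟨k, hk⟩
        exact ⟨k, by linarith⟩
      have hcompl0 : ∀ k : ℕ, ν ({x | g x ≤ -(k : ℝ)}ᶜ) = 0 := by
        intro k
        have hT : MeasurableSet {x | g x ≤ -(k : ℝ)} := hg measurableSet_Iic
        have := measure_compl hT (measure_ne_top ν _)
        rw [hfull k] at this
        simpa [tsub_self, hv] using this
      have hsup : (Set.univ : Set X) ⊆ (⋂ k : ℕ, {x | g x ≤ -(k : ℝ)}) ∪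
          ⋃ k : ℕ, ({x | g x ≤ -(k : ℝ)}ᶜ) := by
        intro x _
        by_cases hx : ∀ k : ℕ, g x ≤ -(k : ℝ)
        · exact Or.inl (Set.mem_iInter.2 hx)
        · push_neg at hx
          obtain ⟨k, hk⟩ := hx
          exact Or.inr (Set.mem_iUnion.2 ⟨k, not_le.2 hk⟩)
      have : v = 0 := by
        have h1 : ν ((⋂ k : ℕ, {x | g x ≤ -(k : ℝ)}) ∪
            ⋃ k : ℕ, ({x | g x ≤ -(k : ℝ)}ᶜ)) = 0 := by
          refine le_antisymm ?_ zero_le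
          calc ν _ ≤ ν (⋂ k : ℕ, {x | g x ≤ -(k : ℝ)}) +
              ν (⋃ k : ℕ, ({x | g x ≤ -(k : ℝ)}ᶜ)) := measure_union_le _ _
            _ ≤ 0 + ∑' k : ℕ, ν ({x | g x ≤ -(k : ℝ)}ᶜ) := by
                refine add_le_add ?_ (measure_iUnion_le _)
                rw [hempty]; simp
            _ = 0 := by simp [hcompl0]
        exact le_antisymm (h1 ▸ measure_mono hsup) zero_le
      exact hν this
    refine ⟨-(k₀ : ℝ), fun t ht => ?_⟩
    by_contra hlt
    push_neg at hlt
    have hsub : {x | g x ≤ t} ⊆ {x | g x ≤ -(k₀ : ℝ)} :=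
      fun x hx => le_trans hx (le_of_lt hlt)
    have : ν {x | g x ≤ t} = 0 := le_antisymm (hk₀ ▸ measure_mono hsub) zero_le
    rw [hS] at ht
    simp only [Set.mem_setOf_eq] at ht
    rw [ht] at this
    exact hν this
  set c := sInf S with hc
  refine ⟨c, ?_⟩
  have hlt : ν {x | g x < c} = 0 := by
    have hcover : {x | g x < c} ⊆ ⋃ k : ℕ, {x | g x ≤ c - 1 / ((k : ℝ) + 1)} := by
      intro x hx
      simp only [Set.mem_setOf_eq] at hx
      obtain ⟨k, hk⟩ := exists_nat_gt (1 / (c - g x))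
      refine Set.mem_iUnion.2 ⟨k, ?_⟩
      simp only [Set.mem_setOf_eq]
      have hpos : 0 < c - g x := by linarith
      have h1 : 1 / (c - g x) < (k : ℝ) + 1 := lt_of_lt_of_le hk (by linarith)
      have hk1 : (0 : ℝ) < (k : ℝ) + 1 := by positivity
      rw [div_lt_iff₀ hpos] at h1
      have : 1 / ((k : ℝ) + 1) < c - g x := by
        rw [div_lt_iff₀ hk1]; linarith
      linarith
    have h0 : ∀ k : ℕ, ν {x | g x ≤ c - 1 / ((k : ℝ) + 1)} = 0 := by
      intro k
      apply hals
      intro hmem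
      have : c ≤ c - 1 / ((k : ℝ) + 1) := csInf_le hSbdd hmem
      have hk1 : (0 : ℝ) < 1 / ((k : ℝ) + 1) := by positivity
      linarith
    refine le_antisymm ?_ zero_le
    calc ν {x | g x < c} ≤ ν (⋃ k : ℕ, {x | g x ≤ c - 1 / ((k : ℝ) + 1)}) :=
          measure_mono hcover
      _ ≤ ∑' k : ℕ, ν {x | g x ≤ c - 1 / ((k : ℝ) + 1)} := measure_iUnion_le _
      _ = 0 := by simp only [one_div] at h0; simp [h0]
  have hgt : ν {x | c < g x} = 0 := by
    have h0 : ∀ k : ℕ, ν {x | c + 1 / ((k : ℝ) + 1) < g x} = 0 := by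
      intro k
      have hk1 : (0 : ℝ) < 1 / ((k : ℝ) + 1) := by positivity
      obtain ⟨t, htS, htlt⟩ := csInf_lt_iff hSbdd hSne |>.1
        (show c < c + 1 / ((k : ℝ) + 1) by linarith)
      have hsub : {x | c + 1 / ((k : ℝ) + 1) < g x} ⊆ {x | g x ≤ t}ᶜ := by
        intro x hx
        simp only [Set.mem_setOf_eq, Set.mem_compl_iff, not_le] at hx ⊢
        linarith
      have hcompl : ν ({x | g x ≤ t}ᶜ) = 0 := by
        have hT : MeasurableSet {x | g x ≤ t} := hg measurableSet_Iic
        have := measure_compl hT (measure_ne_top ν _)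
        rw [htS] at this
        simpa [tsub_self, hv] using this
      exact le_antisymm (hcompl ▸ measure_mono hsub) zero_le
    have hcover : {x | c < g x} ⊆ ⋃ k : ℕ, {x | c + 1 / ((k : ℝ) + 1) < g x} := by
      intro x hx
      simp only [Set.mem_setOf_eq] at hx
      obtain ⟨k, hk⟩ := exists_nat_gt (1 / (g x - c))
      refine Set.mem_iUnion.2 ⟨k, ?_⟩
      simp only [Set.mem_setOf_eq]
      have hpos : 0 < g x - c := by linarith
      have h1 : 1 / (g x - c) < (k : ℝ) + 1 := lt_of_lt_of_le hk (by linarith)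
      have hk1 : (0 : ℝ) < (k : ℝ) + 1 := by positivity
      rw [div_lt_iff₀ hpos] at h1
      have : 1 / ((k : ℝ) + 1) < g x - c := by rw [div_lt_iff₀ hk1]; linarith
      linarith
    refine le_antisymm ?_ zero_le
    calc ν {x | c < g x} ≤ ν (⋃ k : ℕ, {x | c + 1 / ((k : ℝ) + 1) < g x}) :=
          measure_mono hcover
      _ ≤ ∑' k : ℕ, ν {x | c + 1 / ((k : ℝ) + 1) < g x} := measure_iUnion_le _
      _ = 0 := by simp only [one_div] at h0; simp [h0]
  have : ν {x | g x ≠ c} = 0 := by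
    refine le_antisymm ?_ zero_le
    have hsub : {x | g x ≠ c} ⊆ {x | g x < c} ∪ {x | c < g x} := by
      intro x hx
      rcases lt_or_gt_of_ne hx with h | h
      · exact Or.inl h
      · exact Or.inr h
    calc ν {x | g x ≠ c} ≤ ν ({x | g x < c} ∪ {x | c < g x}) := measure_mono hsub
      _ ≤ ν {x | g x < c} + ν {x | c < g x} := measure_union_le _ _
      _ = 0 := by rw [hlt, hgt, add_zero]
  exact this

lemma ae_eq_const_of_zero_or_full_complex {X : Type*} [MeasurableSpace X] (ν : Measure X)
    [IsFiniteMeasure ν]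
    (hdich : ∀ T : Set X, MeasurableSet T → ν T = 0 ∨ ν T = ν Set.univ)
    (hν : ν Set.univ ≠ 0) (g : X → ℂ) (hg : Measurable g) :
    ∃ c : ℂ, g =ᵐ[ν] fun _ => c := by
  obtain ⟨a, ha⟩ := ae_eq_const_of_zero_or_full ν hdich hν (fun x => (g x).re)
    (Complex.measurable_re.comp hg)
  obtain ⟨b, hb⟩ := ae_eq_const_of_zero_or_full ν hdich hν (fun x => (g x).im)
    (Complex.measurable_im.comp hg)
  refine ⟨⟨a, b⟩, ?_⟩
  filter_upwards [ha, hb] with x hxa hxb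
  exact Complex.ext hxa hxb

lemma fin_one_pairwise {α : Type*} {r : α → α → Prop} (f : Fin 1 → α) :
    Pairwise (Function.onFun r f) := by
  intro i j hij
  exact absurd ((Fin.eq_zero i).trans (Fin.eq_zero j).symm) hij

lemma pairwise_disjoint_snoc {X : Type*} {K : ℕ} {B : Fin (K + 1) → Set X} {A : Set X}
    (hB : Pairwise (Function.onFun Disjoint B)) (hA : ∀ i, Disjoint (B i) A) :
    Pairwise (Function.onFun Disjoint (Fin.snoc B A : Fin (K + 2) → Set X)) := by
  intro i j hij
  rcases Fin.eq_castSucc_or_eq_last i with ⟨i', rfl⟩ | rfl <;>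
    rcases Fin.eq_castSucc_or_eq_last j with ⟨j', rfl⟩ | rfl
  · have : i' ≠ j' := fun h => hij (by rw [h])
    simpa only [Function.onFun, Fin.snoc_castSucc] using hB this
  · simpa only [Function.onFun, Fin.snoc_castSucc, Fin.snoc_last] using hA i'
  · simpa only [Function.onFun, Fin.snoc_castSucc, Fin.snoc_last] using (hA j').symm
  · exact absurd rfl hij

lemma exists_atomic_partition {X : Type*} [MeasurableSpace X] (μ : Measure X)
    [IsFiniteMeasure μ] :
    ∀ (K : ℕ) (S : Set X), MeasurableSet S →
    (∀ B : Fin (K + 1) → Set X,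
      (∀ j, MeasurableSet (B j) ∧ B j ⊆ S ∧ 0 < μ (B j)) → ¬ Pairwise (Function.onFun Disjoint B)) →
    ∃ (m : ℕ) (P : Fin m → Set X),
      (∀ j, MeasurableSet (P j) ∧ P j ⊆ S ∧ 0 < μ (P j) ∧
        ∀ T, MeasurableSet T → T ⊆ P j → μ T = 0 ∨ μ (P j \ T) = 0) ∧
      Pairwise (Function.onFun Disjoint P) ∧ μ (S \ ⋃ j, P j) = 0 := by
  intro K
  induction K with
  | zero =>
    intro S hS hcap
    have hS0 : μ S = 0 := by
      by_contra h
      exact hcap (fun _ => S) (fun j => ⟨hS, subset_rfl, pos_iff_ne_zero.2 h⟩)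
        (fin_one_pairwise _)
    refine ⟨0, Fin.elim0, fun j => j.elim0, fun i => i.elim0, ?_⟩
    rw [Set.iUnion_of_empty, Set.diff_empty]
    exact hS0
  | succ K ih =>
    intro S hS hcap
    by_cases hS0 : μ S = 0
    · refine ⟨0, Fin.elim0, fun j => j.elim0, fun i => i.elim0, ?_⟩
      rw [Set.iUnion_of_empty, Set.diff_empty]
      exact hS0
    by_cases hatom : ∀ T, MeasurableSet T → T ⊆ S → μ T = 0 ∨ μ (S \ T) = 0
    · refine ⟨1, fun _ => S, fun j => ⟨hS, subset_rfl, pos_iff_ne_zero.2 hS0, hatom⟩,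
        fin_one_pairwise _, ?_⟩
      rw [Set.iUnion_const, Set.diff_self]
      exact measure_empty
    · push_neg at hatom
      obtain ⟨T, hTmeas, hTsub, hT0, hST0⟩ := hatom
      have hSTmeas : MeasurableSet (S \ T) := hS.diff hTmeas
      -- capacity bound for a measurable subset U of S whose complement in S has positive measure
      have capsub : ∀ U : Set X, MeasurableSet U → U ⊆ S → 0 < μ (S \ U) →
          ∀ B : Fin (K + 1) → Set X,
          (∀ j, MeasurableSet (B j) ∧ B j ⊆ U ∧ 0 < μ (B j)) →
          ¬ Pairwise (Function.onFun Disjoint B) := by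
        intro U hUmeas hUsub hUc B hB hdisj
        apply hcap (Fin.snoc B (S \ U))
        · intro j
          rcases Fin.eq_castSucc_or_eq_last j with ⟨j', rfl⟩ | rfl
          · rw [Fin.snoc_castSucc]
            exact ⟨(hB j').1, (hB j').2.1.trans hUsub, (hB j').2.2⟩
          · rw [Fin.snoc_last]
            exact ⟨hS.diff hUmeas, Set.diff_subset, hUc⟩
        · exact pairwise_disjoint_snoc hdisj
            (fun i => Set.disjoint_sdiff_right.mono_left (hB i).2.1)
      obtain ⟨m₁, P₁, h₁, hd₁, hr₁⟩ := ih T hTmeas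
        (capsub T hTmeas hTsub (pos_iff_ne_zero.2 hST0))
      obtain ⟨m₂, P₂, h₂, hd₂, hr₂⟩ := ih (S \ T) hSTmeas
        (capsub (S \ T) hSTmeas Set.diff_subset
          (by rw [Set.diff_diff_cancel_left hTsub]; exact pos_iff_ne_zero.2 hT0))
      set e := finSumFinEquiv (m := m₁) (n := m₂) with he
      refine ⟨m₁ + m₂, (Sum.elim P₁ P₂) ∘ e.symm, ?_, ?_, ?_⟩
      · intro j
        rcases hsj : e.symm j with i | i
        · simp only [Function.comp_apply, hsj, Sum.elim_inl]
          exact ⟨(h₁ i).1, (h₁ i).2.1.trans hTsub, (h₁ i).2.2⟩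
        · simp only [Function.comp_apply, hsj, Sum.elim_inr]
          exact ⟨(h₂ i).1, (h₂ i).2.1.trans Set.diff_subset, (h₂ i).2.2⟩
      · intro i j hij
        have hne : e.symm i ≠ e.symm j := fun h => hij (e.symm.injective h)
        have hdTS : Disjoint T (S \ T) := Set.disjoint_sdiff_right
        rcases hsi : e.symm i with a | a <;> rcases hsj : e.symm j with b | b <;>
          rw [hsi, hsj] at hne <;>
          simp only [Function.onFun, Function.comp_apply, hsi, hsj, Sum.elim_inl, Sum.elim_inr]
        · exact hd₁ (fun h => hne (by rw [h]))
        · exact hdTS.mono (h₁ a).2.1 (h₂ b).2.1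
        · exact (hdTS.mono (h₁ b).2.1 (h₂ a).2.1).symm
        · exact hd₂ (fun h => hne (by rw [h]))
      · have hU : (⋃ j, ((Sum.elim P₁ P₂) ∘ e.symm) j) = (⋃ i, P₁ i) ∪ ⋃ i, P₂ i := by
          rw [show (⋃ j, ((Sum.elim P₁ P₂) ∘ e.symm) j) = ⋃ s, Sum.elim P₁ P₂ s from
            e.symm.surjective.iUnion_comp _]
          exact Set.iUnion_sum
        rw [hU]
        have hsub : S \ ((⋃ i, P₁ i) ∪ ⋃ i, P₂ i) ⊆
            (T \ ⋃ i, P₁ i) ∪ ((S \ T) \ ⋃ i, P₂ i) := by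
          intro x hx
          rcases hx with ⟨hxS, hxn⟩
          by_cases hxT : x ∈ T
          · exact Or.inl ⟨hxT, fun h => hxn (Or.inl h)⟩
          · exact Or.inr ⟨⟨hxS, hxT⟩, fun h => hxn (Or.inr h)⟩
        refine le_antisymm ?_ zero_le
        calc μ (S \ ((⋃ i, P₁ i) ∪ ⋃ i, P₂ i))
            ≤ μ ((T \ ⋃ i, P₁ i) ∪ ((S \ T) \ ⋃ i, P₂ i)) := measure_mono hsub
          _ ≤ μ (T \ ⋃ i, P₁ i) + μ ((S \ T) \ ⋃ i, P₂ i) := measure_union_le _ _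
          _ = 0 := by rw [hr₁, hr₂, add_zero]

lemma Lp_coeFn_finset_sum {X : Type*} [MeasurableSpace X] {μ : Measure X} {p : ℝ≥0∞}
    [Fact (1 ≤ p)] {ι : Type*} (s : Finset ι) (f : ι → Lp ℂ p μ) :
    ⇑(∑ i ∈ s, f i) =ᵐ[μ] fun x => ∑ i ∈ s, f i x := by
  classical
  induction s using Finset.induction_on with
  | empty => simp only [Finset.sum_empty]; exact Lp.coeFn_zero ℂ p μ
  | insert _ _ hnot ih =>
    rename_i a s'
    rw [Finset.sum_insert hnot]
    filter_upwards [Lp.coeFn_add (f a) (∑ i ∈ s', f i), ih] with x hx1 hx2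
    rw [hx1]
    simp only [Pi.add_apply, hx2, Finset.sum_insert hnot]

/-- On a finite measure space, if a finite sum `W = ∑ uᵢ C_{φᵢ}` of weighted composition
operators with nonnegative weights is bounded from `L^p(μ)` into `L^∞(μ)`, injective and
has closed range, then `∑ uᵢᵖ ≥ δ` a.e. for some `δ > 0`. -/
theorem sum_pow_bounded_below_of_closed_range_into_Linfty
    {X : Type*} [MeasurableSpace X] {μ : Measure X} [IsFiniteMeasure μ]
    (p : ℝ≥0∞) [Fact (1 ≤ p)] (hptop : p ≠ ∞)
    (n : ℕ) (u : Fin n → X → ℝ) (hu : ∀ i, Measurable (u i)) (hunn : ∀ i x, 0 ≤ u i x)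
    (φ : Fin n → X → X) (hφ : ∀ i, Measurable (φ i))
    (hns : ∀ i, μ.map (φ i) ≪ μ)
    (W : Lp ℂ p μ →L[ℂ] Lp ℂ ∞ μ)
    (hW : ∀ f : Lp ℂ p μ,
      (W f : X → ℂ) =ᵐ[μ] fun x => ∑ i, (u i x : ℂ) * (f : X → ℂ) (φ i x))
    (hclosed : IsClosed (Set.range W)) (hinj : Function.Injective W) :
    ∃ δ : ℝ, 0 < δ ∧ ∀ᵐ x ∂μ, δ ≤ ∑ i, u i x ^ p.toReal := by
  classical
  set r := p.toReal with hr
  have hp1 : 1 ≤ p := Fact.out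
  have hp0 : p ≠ 0 := fun h => by simp [h] at hp1
  have hr0 : 0 < r := ENNReal.toReal_pos hp0 hptop
  -- trivial case : zero measure
  by_cases hμ : μ Set.univ = 0
  · refine ⟨1, one_pos, ?_⟩
    have : μ {x | ¬ (1 : ℝ) ≤ ∑ i, u i x ^ r} = 0 :=
      le_antisymm (le_trans (measure_mono (Set.subset_univ _)) hμ.le) zero_le
    exact (ae_iff (p := fun x => (1:ℝ) ≤ ∑ i, u i x ^ r)).2 this
  -- Step A : W is bounded below
  obtain ⟨d, hd0, hdle⟩ : ∃ d : ℝ, 0 < d ∧ ∀ f : Lp ℂ p μ, d * ‖f‖ ≤ ‖W f‖ := by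
    haveI : Fact ((1:ℝ≥0∞) ≤ ∞) := ⟨le_top⟩
    have hrc : IsClosed ((W.range : Submodule ℂ (Lp ℂ ∞ μ)) : Set (Lp ℂ ∞ μ)) := by
      have : ((W.range : Submodule ℂ (Lp ℂ ∞ μ)) : Set (Lp ℂ ∞ μ)) = Set.range W := by
        ext y
        simp [LinearMap.mem_range]
      rw [this]
      exact hclosed
    haveI : CompleteSpace (W.range) := hrc.completeSpace_coe
    set W' : Lp ℂ p μ →L[ℂ] (W.range) :=
      W.codRestrict (W.range) (fun f => LinearMap.mem_range_self _ f) with hW'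
    have hker : W'.ker = ⊥ := by
      apply LinearMap.ker_eq_bot_of_injective
      intro a b hab
      apply hinj
      have := congrArg (Subtype.val) hab
      simpa [hW', ContinuousLinearMap.coe_codRestrict_apply] using this
    have hsurj : W'.range = ⊤ := by
      rw [LinearMap.range_eq_top]
      rintro ⟨y, hy⟩
      obtain ⟨x, rfl⟩ := hy
      exact ⟨x, rfl⟩
    obtain ⟨K, hK⟩ : ∃ K : NNReal, AntilipschitzWith K W' :=
      ⟨_, (ContinuousLinearEquiv.ofBijective W' hker hsurj).antilipschitz⟩
    refine ⟨((K : ℝ) + 1)⁻¹, by positivity, fun f => ?_⟩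
    have h1 : ‖f‖ ≤ (K : ℝ) * ‖W' f‖ := by
      have := hK.le_mul_dist f 0
      simpa [dist_eq_norm] using this
    have h2 : ‖W' f‖ = ‖W f‖ := rfl
    rw [h2] at h1
    rw [inv_mul_le_iff₀ (by positivity)]
    nlinarith [norm_nonneg (W f)]
  -- a.e. bound by the L^∞ norm
  have hLinfty : ∀ g : Lp ℂ ∞ μ, ∀ᵐ x ∂μ, ‖(g : X → ℂ) x‖ ≤ ‖g‖ := by
    intro g
    have hfin : eLpNormEssSup (⇑g) μ ≠ ∞ := by
      have := Lp.eLpNorm_lt_top g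
      rw [eLpNorm_exponent_top] at this
      exact this.ne
    filter_upwards [ae_le_eLpNormEssSup (f := ⇑g) (μ := μ)] with x hx
    have hxx : ‖(g : X → ℂ) x‖ = ((‖(g : X → ℂ) x‖₊ : ℝ≥0∞)).toReal := by simp
    rw [hxx, Lp.norm_def, eLpNorm_exponent_top]
    exact ENNReal.toReal_mono hfin hx
  -- composition with φ i preserves a.e. equality
  have hcomp : ∀ (i : Fin n) (g g' : X → ℂ), g =ᵐ[μ] g' →
      (fun x => g (φ i x)) =ᵐ[μ] fun x => g' (φ i x) := by
    intro i g g' h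
    exact (Measure.QuasiMeasurePreserving.mk (hφ i) (hns i)).ae_eq_comp h
  -- the defining formula with an arbitrary a.e. representative
  have hformula : ∀ (f : Lp ℂ p μ) (g : X → ℂ), (⇑f =ᵐ[μ] g) →
      ⇑(W f) =ᵐ[μ] fun x => ∑ i, (u i x : ℂ) * g (φ i x) := by
    intro f g hg
    have h2 : ∀ i : Fin n, (fun x => (f : X → ℂ) (φ i x)) =ᵐ[μ] fun x => g (φ i x) :=
      fun i => hcomp i _ _ hg
    filter_upwards [hW f, ae_all_iff.2 h2] with x hx1 hx2
    rw [hx1]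
    exact Finset.sum_congr rfl fun i _ => by rw [hx2 i]
  -- key pointwise bound from boundedness of W
  have keybound : ∀ B : Set X, MeasurableSet B →
      ∀ᵐ x ∂μ, ∀ i, φ i x ∈ B → u i x ≤ ‖W‖ * (μ B).toReal ^ (1/r) := by
    intro B hB
    set eB := indicatorConstLp p hB (measure_ne_top μ B) (1:ℂ) with heB
    have hnorm : ‖W eB‖ ≤ ‖W‖ * (μ B).toReal ^ (1/r) := by
      have h1 := W.le_opNorm eB
      rwa [heB, norm_indicatorConstLp hp0 hptop, norm_one, one_mul] at h1
    have hrep := hformula eB (Set.indicator B (fun _ => (1:ℂ))) indicatorConstLp_coeFn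
    filter_upwards [hrep, hLinfty (W eB)] with x hx1 hx2
    intro i hiB
    have hsum : ((W eB : X → ℂ) x) =
        ((∑ j, u j x * Set.indicator B (fun _ => (1:ℝ)) (φ j x) : ℝ) : ℂ) := by
      rw [hx1]
      push_cast
      refine Finset.sum_congr rfl fun j _ => ?_
      by_cases h : φ j x ∈ B <;>
        simp [Set.indicator_of_mem, Set.indicator_of_notMem, h]
    have hterm : u i x ≤ ∑ j, u j x * Set.indicator B (fun _ => (1:ℝ)) (φ j x) := by
      have hnn : ∀ j ∈ Finset.univ,
          0 ≤ u j x * Set.indicator B (fun _ => (1:ℝ)) (φ j x) := by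
        intro j _
        refine mul_nonneg (hunn j x) ?_
        by_cases h : φ j x ∈ B <;>
          simp [Set.indicator_of_mem, Set.indicator_of_notMem, h]
      have := Finset.single_le_sum hnn (Finset.mem_univ i)
      rwa [Set.indicator_of_mem hiB, mul_one] at this
    calc u i x ≤ ∑ j, u j x * Set.indicator B (fun _ => (1:ℝ)) (φ j x) := hterm
      _ ≤ ‖(W eB : X → ℂ) x‖ := by rw [hsum, Complex.norm_real]; exact le_abs_self _
      _ ≤ ‖W eB‖ := hx2
      _ ≤ ‖W‖ * (μ B).toReal ^ (1/r) := hnorm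
  -- capacity bound : no (K+1) pairwise disjoint sets of positive measure
  set Q : ℝ := (n : ℝ) * ‖W‖ / d with hQ
  have hQ0 : 0 ≤ Q := by positivity
  set K : ℕ := Nat.ceil (Q ^ r) with hKdef
  have hcap : ∀ B : Fin (K + 1) → Set X,
      (∀ j, MeasurableSet (B j) ∧ B j ⊆ Set.univ ∧ 0 < μ (B j)) →
      ¬ Pairwise (Function.onFun Disjoint B) := by
    intro B hB hdisj
    -- the test function
    set c : Fin (K + 1) → ℝ := fun j => ((μ (B j)).toReal ^ (1/r))⁻¹ with hc
    have hμBpos : ∀ j, 0 < (μ (B j)).toReal :=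
      fun j => ENNReal.toReal_pos (hB j).2.2.ne' (measure_ne_top μ _)
    have hcpos : ∀ j, 0 < c j := by
      intro j
      rw [hc]
      have := Real.rpow_pos_of_pos (hμBpos j) (1/r)
      positivity
    set g : X → ℂ := fun x => ∑ j, (c j : ℂ) * Set.indicator (B j) (fun _ => (1:ℂ)) x
      with hg
    have hgmeas : Measurable g := by
      apply Finset.measurable_sum
      intro j _
      exact (measurable_const.indicator (hB j).1).const_mul _
    have hgbdd : ∀ x, ‖g x‖ ≤ ∑ j, c j := by
      intro x
      calc ‖g x‖ ≤ ∑ j, ‖(c j : ℂ) * Set.indicator (B j) (fun _ => (1:ℂ)) x‖ :=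
            norm_sum_le _ _
        _ ≤ ∑ j, c j := by
            refine Finset.sum_le_sum fun j _ => ?_
            rw [norm_mul, Complex.norm_real]
            by_cases h : x ∈ B j
            · simp [Set.indicator_of_mem h, abs_of_pos (hcpos j)]
            · simp only [Set.indicator_of_notMem h, norm_zero, mul_zero]
              exact (hcpos j).le
    have hmem : MemLp g p μ :=
      MemLp.of_bound hgmeas.aestronglyMeasurable _ (Filter.Eventually.of_forall hgbdd)
    set f : Lp ℂ p μ := hmem.toLp g with hf
    have hfcoe : ⇑f =ᵐ[μ] g := hmem.coeFn_toLp
    -- lower bound on ‖f‖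
    have hgval : ∀ j, ∀ x ∈ B j, g x = (c j : ℂ) := by
      intro j x hx
      simp only [hg]
      rw [Finset.sum_eq_single j]
      · simp [Set.indicator_of_mem hx]
      · intro b _ hbj
        have : x ∉ B b := fun hxb =>
          (Set.disjoint_left.1 (hdisj hbj) hxb) hx
        simp [Set.indicator_of_notMem this]
      · intro h
        exact absurd (Finset.mem_univ j) h
    have hlow : ((K : ℝ) + 1) ^ (1/r) ≤ ‖f‖ := by
      have hint : ∀ j, ∫⁻ x in B j, ((‖g x‖₊ : ℝ≥0∞)) ^ r ∂μ = 1 := by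
        intro j
        have hconst : ∫⁻ x in B j, ((‖g x‖₊ : ℝ≥0∞)) ^ r ∂μ
            = ∫⁻ _ in B j, (ENNReal.ofReal ((c j) ^ r)) ∂μ := by
          apply setLIntegral_congr_fun (hB j).1
          intro x hx; dsimp only
          rw [hgval j x hx]
          rw [show ((‖((c j : ℝ) : ℂ)‖₊ : ℝ≥0∞)) = ENNReal.ofReal (c j) by
            rw [← enorm_eq_nnnorm, ← ofReal_norm, Complex.norm_real, Real.norm_eq_abs, abs_of_pos (hcpos j)]]
          rw [← ENNReal.ofReal_rpow_of_pos (hcpos j)]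
        rw [hconst, setLIntegral_const]
        have hcr : (c j) ^ r = ((μ (B j)).toReal)⁻¹ := by
          have ht0 : (0:ℝ) ≤ (μ (B j)).toReal := ENNReal.toReal_nonneg
          simp only [hc]
          rw [Real.inv_rpow (Real.rpow_nonneg ht0 _), ← Real.rpow_mul ht0, one_div,
            inv_mul_cancel₀ hr0.ne', Real.rpow_one]
        rw [hcr]
        rw [ENNReal.ofReal_inv_of_pos (hμBpos j)]
        rw [ENNReal.ofReal_toReal (measure_ne_top μ _)]
        exact ENNReal.inv_mul_cancel (hB j).2.2.ne' (measure_ne_top μ _)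
      have hlint : (((K : ℕ) + 1 : ℕ) : ℝ≥0∞) ≤ ∫⁻ x, ((‖g x‖₊ : ℝ≥0∞)) ^ r ∂μ := by
        have hle : ∫⁻ x in ⋃ j, B j, ((‖g x‖₊ : ℝ≥0∞)) ^ r ∂μ ≤ ∫⁻ x, ((‖g x‖₊ : ℝ≥0∞)) ^ r ∂μ :=
          setLIntegral_le_lintegral _ _
        rw [lintegral_iUnion (fun j => (hB j).1) hdisj] at hle
        simp only [hint, tsum_fintype] at hle
        simpa using hle
      have hnorm : ‖f‖ = (eLpNorm g p μ).toReal := by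
        rw [Lp.norm_def, eLpNorm_congr_ae hfcoe]
      rw [hnorm, eLpNorm_eq_lintegral_rpow_enorm_toReal hp0 hptop]
      have h5 : (((K : ℕ) + 1 : ℕ) : ℝ≥0∞) ^ (1/r)
          ≤ (∫⁻ x, ((‖g x‖₊ : ℝ≥0∞)) ^ r ∂μ) ^ (1/r) :=
        ENNReal.rpow_le_rpow hlint (by positivity)
      have h6 := ENNReal.toReal_mono ?_ h5
      · refine le_trans (le_of_eq ?_) h6
        rw [← ENNReal.toReal_rpow]
        norm_num [ENNReal.toReal_add (ENNReal.natCast_ne_top K) ENNReal.one_ne_top]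
      · refine (ENNReal.rpow_lt_top_of_nonneg (by positivity) ?_).ne
        have := hmem.eLpNorm_lt_top
        rw [eLpNorm_eq_lintegral_rpow_enorm_toReal hp0 hptop] at this
        simp only [enorm_eq_nnnorm, ← hr] at this
        intro hcon
        rw [hcon] at this
        rw [ENNReal.top_rpow_of_pos (by positivity)] at this
        exact (lt_irrefl _ this).elim
    -- upper bound on ‖W f‖
    have hup : ‖W f‖ ≤ (n : ℝ) * ‖W‖ := by
      have hbd : ∀ᵐ x ∂μ, ‖(W f : X → ℂ) x‖ ≤ (n : ℝ) * ‖W‖ := by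
        have hkb : ∀ᵐ x ∂μ, ∀ j i, φ i x ∈ B j →
            u i x ≤ ‖W‖ * (μ (B j)).toReal ^ (1/r) :=
          ae_all_iff.2 fun j => keybound (B j) (hB j).1
        filter_upwards [hformula f g hfcoe, hkb] with x hx1 hx2
        rw [hx1]
        have hterm : ∀ i : Fin n, ‖(u i x : ℂ) * g (φ i x)‖ ≤ ‖W‖ := by
          intro i
          by_cases hex : ∃ j, φ i x ∈ B j
          · obtain ⟨j, hj⟩ := hex
            rw [hgval j _ hj]
            rw [norm_mul, Complex.norm_real, Complex.norm_real, Real.norm_eq_abs,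
              Real.norm_eq_abs, abs_of_nonneg (hunn i x), abs_of_pos (hcpos j)]
            have := hx2 j i hj
            have hcj : c j = ((μ (B j)).toReal ^ (1/r))⁻¹ := rfl
            rw [hcj]
            rw [mul_inv_le_iff₀ (Real.rpow_pos_of_pos (hμBpos j) _)]
            exact this
          · push_neg at hex
            have hz : g (φ i x) = 0 := by
              simp only [hg]
              refine Finset.sum_eq_zero fun j _ => ?_
              simp [Set.indicator_of_notMem (hex j)]
            rw [hz, mul_zero, norm_zero]
            exact norm_nonneg W
        calc ‖∑ i, (u i x : ℂ) * g (φ i x)‖ ≤ ∑ i, ‖(u i x : ℂ) * g (φ i x)‖ :=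
              norm_sum_le _ _
          _ ≤ ∑ _i : Fin n, ‖W‖ := Finset.sum_le_sum fun i _ => hterm i
          _ = (n : ℝ) * ‖W‖ := by simp [mul_comm]
      have := Lp.norm_le_of_ae_bound (f := W f) (by positivity : (0:ℝ) ≤ (n : ℝ) * ‖W‖) hbd
      simpa using this
    -- contradiction
    have hchain : d * ((K : ℝ) + 1) ^ (1/r) ≤ (n : ℝ) * ‖W‖ := by
      calc d * ((K : ℝ) + 1) ^ (1/r) ≤ d * ‖f‖ := by
            refine mul_le_mul_of_nonneg_left hlow hd0.le
        _ ≤ ‖W f‖ := hdle f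
        _ ≤ (n : ℝ) * ‖W‖ := hup
    have hK1 : ((K : ℝ) + 1) ^ (1/r) ≤ Q := by
      rw [hQ, le_div_iff₀ hd0]
      linarith [hchain]
    have hK2 : (K : ℝ) + 1 ≤ Q ^ r := by
      have h7 : (((K : ℝ) + 1) ^ (1/r)) ^ r ≤ Q ^ r :=
        Real.rpow_le_rpow (by positivity) hK1 hr0.le
      rwa [← Real.rpow_mul (by positivity), one_div, inv_mul_cancel₀ hr0.ne',
        Real.rpow_one] at h7
    have hK3 : Q ^ r ≤ (K : ℝ) := Nat.le_ceil _
    linarith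
  -- atomic partition
  obtain ⟨m, P, hP, hPdisj, hPres⟩ :=
    exists_atomic_partition μ K Set.univ MeasurableSet.univ
      (fun B hB => hcap B fun j => ⟨(hB j).1, Set.subset_univ _, (hB j).2.2⟩)
  -- atomic structure
  haveI : Fact ((1:ℝ≥0∞) ≤ ∞) := ⟨le_top⟩
  have hPmeas : ∀ j, MeasurableSet (P j) := fun j => (hP j).1
  have hPpos : ∀ j, 0 < μ (P j) := fun j => (hP j).2.2.1
  have hPatom : ∀ j, ∀ T, MeasurableSet T → T ⊆ P j → μ T = 0 ∨ μ (P j \ T) = 0 :=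
    fun j => (hP j).2.2.2
  have hdich : ∀ j, ∀ T : Set X, MeasurableSet T →
      (μ.restrict (P j)) T = 0 ∨ (μ.restrict (P j)) T = (μ.restrict (P j)) Set.univ := by
    intro j T hT
    rw [Measure.restrict_apply hT, Measure.restrict_apply_univ]
    rcases hPatom j (T ∩ P j) (hT.inter (hPmeas j)) Set.inter_subset_right with h | h
    · exact Or.inl h
    · right
      refine le_antisymm (measure_mono Set.inter_subset_right) ?_
      calc μ (P j) ≤ μ ((T ∩ P j) ∪ (P j \ (T ∩ P j))) :=
            measure_mono (fun x hx => by
              by_cases hxT : x ∈ T ∩ P j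
              · exact Or.inl hxT
              · exact Or.inr ⟨hx, hxT⟩)
        _ ≤ μ (T ∩ P j) + μ (P j \ (T ∩ P j)) := measure_union_le _ _
        _ = μ (T ∩ P j) := by rw [h, add_zero]
  have hrestr_ne : ∀ j, (μ.restrict (P j)) Set.univ ≠ 0 := by
    intro j
    rw [Measure.restrict_apply_univ]
    exact (hPpos j).ne'
  -- the weights are a.e. constant on each atom
  have hUc : ∀ (i : Fin n) (j : Fin m), ∃ c : ℝ, u i =ᵐ[μ.restrict (P j)] fun _ => c :=
    fun i j => ae_eq_const_of_zero_or_full (μ.restrict (P j)) (hdich j) (hrestr_ne j)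
      (u i) (hu i)
  choose C hC using hUc
  have hCnn : ∀ i j, 0 ≤ C i j := by
    intro i j
    by_contra hneg
    push_neg at hneg
    have h0 : (μ.restrict (P j)) {x | ¬ (u i x = C i j)} = 0 := ae_iff.1 (hC i j)
    have hall : {x | ¬ (u i x = C i j)} = Set.univ := by
      ext x
      simp only [Set.mem_setOf_eq, Set.mem_univ, iff_true]
      intro h
      have := hunn i x
      rw [h] at this
      linarith
    rw [hall] at h0
    exact hrestr_ne j h0
  set s : Fin m → ℝ := fun j => ∑ i, (C i j) ^ r with hs
  by_cases hspos : ∀ j, 0 < s j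
  · -- all atoms have positive weight sum : done
    have hm : m ≠ 0 := by
      intro h
      subst h
      rw [Set.iUnion_of_empty, Set.diff_empty] at hPres
      exact hμ hPres
    haveI : Nonempty (Fin m) := ⟨⟨0, Nat.pos_of_ne_zero hm⟩⟩
    refine ⟨Finset.univ.inf' Finset.univ_nonempty s, ?_, ?_⟩
    · rw [Finset.lt_inf'_iff]
      exact fun j _ => hspos j
    · have hcov : ∀ᵐ x ∂μ, x ∈ ⋃ j, P j := by
        have hc : μ ((⋃ j, P j)ᶜ) = 0 := by
          rw [Set.compl_eq_univ_diff]
          exact hPres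
        exact hc
      have hj : ∀ j, ∀ᵐ x ∂μ, x ∈ P j → ∑ i, u i x ^ r = s j := by
        intro j
        have hae : ∀ᵐ x ∂(μ.restrict (P j)), ∑ i, u i x ^ r = s j := by
          filter_upwards [ae_all_iff.2 fun i => hC i j] with x hx
          simp only [hs]
          exact Finset.sum_congr rfl fun i _ => by rw [hx i]
        rwa [ae_restrict_iff' (hPmeas j)] at hae
      filter_upwards [hcov, ae_all_iff.2 hj] with x hx1 hx2
      obtain ⟨j, hjx⟩ := Set.mem_iUnion.1 hx1
      rw [hx2 j hjx]
      exact Finset.inf'_le _ (Finset.mem_univ j)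
  · -- some atom with zero weights : contradiction with injectivity
    exfalso
    push_neg at hspos
    obtain ⟨j₀, hj₀⟩ := hspos
    have hC0 : ∀ i, C i j₀ = 0 := by
      intro i
      by_contra hne
      have hpos : 0 < (C i j₀) ^ r :=
        Real.rpow_pos_of_pos (lt_of_le_of_ne (hCnn i j₀) (Ne.symm hne)) r
      have hsumpos : 0 < s j₀ :=
        Finset.sum_pos' (fun i' _ => Real.rpow_nonneg (hCnn i' j₀) r)
          ⟨i, Finset.mem_univ i, hpos⟩
      exact absurd hsumpos (not_lt.2 hj₀)
    have hu0 : ∀ i, u i =ᵐ[μ.restrict (P j₀)] fun _ => (0:ℝ) := by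
      intro i
      refine (hC i j₀).trans ?_
      rw [hC0 i]
    set e : Fin m → Lp ℂ p μ :=
      fun k => indicatorConstLp p (hPmeas k) (measure_ne_top μ _) (1:ℂ) with he
    have hWe : ∀ k l, ∃ t : ℂ, ⇑(W (e k)) =ᵐ[μ.restrict (P l)] fun _ => t := by
      intro k l
      have ham := Lp.aestronglyMeasurable (W (e k))
      obtain ⟨t, htt⟩ := ae_eq_const_of_zero_or_full_complex (μ.restrict (P l)) (hdich l)
        (hrestr_ne l) ham.mk ham.stronglyMeasurable_mk.measurable
      have h5 : ⇑(W (e k)) =ᵐ[μ.restrict (P l)] ham.mk ⇑(W (e k)) :=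
        ae_restrict_of_ae ham.ae_eq_mk
      exact ⟨t, h5.trans htt⟩
    choose t ht using hWe
    have hconst_eq : ∀ (l : Fin m) (a b : ℂ),
        ((fun _ => a : X → ℂ) =ᵐ[μ.restrict (P l)] fun _ => b) → a = b := by
      intro l a b hab
      by_contra hne
      have h0 := ae_iff.1 hab
      have hall : {x : X | ¬ ((fun _ => a : X → ℂ) x = (fun _ => b : X → ℂ) x)}
          = Set.univ := by
        ext x
        simpa using hne
      rw [hall] at h0
      exact hrestr_ne l h0
    have hrow : ∀ k, t k j₀ = 0 := by
      intro k
      have h1 : ⇑(W (e k)) =ᵐ[μ.restrict (P j₀)] fun _ => (0:ℂ) := by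
        filter_upwards [ae_restrict_of_ae
          (hformula (e k) _ indicatorConstLp_coeFn), ae_all_iff.2 hu0] with x hx1 hx2
        rw [hx1]
        refine Finset.sum_eq_zero fun i _ => ?_
        rw [hx2 i]
        simp
      exact hconst_eq j₀ _ _ ((ht k j₀).symm.trans h1)
    set M : Matrix (Fin m) (Fin m) ℂ := Matrix.of fun l k => t k l with hM
    have hdet : M.det = 0 := Matrix.det_eq_zero_of_row_eq_zero j₀ fun k => hrow k
    obtain ⟨v, hv0, hvM⟩ := (Matrix.exists_mulVec_eq_zero_iff).2 hdet
    set f₀ : Lp ℂ p μ := ∑ k, v k • e k with hf₀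
    have hf₀coe : ⇑f₀ =ᵐ[μ] fun x => ∑ k, v k * Set.indicator (P k) (fun _ => (1:ℂ)) x := by
      have h1 := Lp_coeFn_finset_sum Finset.univ (fun k => v k • e k)
      have h2 : ∀ k : Fin m, ⇑(v k • e k) =ᵐ[μ]
          fun x => v k * Set.indicator (P k) (fun _ => (1:ℂ)) x := by
        intro k
        filter_upwards [Lp.coeFn_smul (v k) (e k),
          indicatorConstLp_coeFn (p := p) (hs := hPmeas k)
            (hμs := measure_ne_top μ (P k)) (c := (1:ℂ))] with x hx1 hx2
        rw [hx1]
        simp only [Pi.smul_apply, smul_eq_mul]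
        exact congrArg (fun z => v k * z) hx2
      filter_upwards [h1, ae_all_iff.2 h2] with x hx1 hx2
      rw [hx1]
      exact Finset.sum_congr rfl fun k _ => hx2 k
    have hf₀ne : f₀ ≠ 0 := by
      obtain ⟨k₀, hk₀⟩ : ∃ k, v k ≠ 0 := by
        by_contra h
        push_neg at h
        exact hv0 (funext h)
      intro hzero
      have hz : ⇑f₀ =ᵐ[μ] fun _ => (0:ℂ) := by
        rw [hzero]
        exact Lp.coeFn_zero ℂ p μ
      have hval : (fun _ => v k₀ : X → ℂ) =ᵐ[μ.restrict (P k₀)] fun _ => (0:ℂ) := by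
        have h3 := ae_restrict_of_ae (s := P k₀) (hf₀coe.symm.trans hz)
        have h4 : ∀ᵐ x ∂(μ.restrict (P k₀)), x ∈ P k₀ :=
          (ae_restrict_iff' (hPmeas k₀)).2 (Filter.Eventually.of_forall fun x hx => hx)
        filter_upwards [h3, h4] with x hx1 hx2
        have h5 : (∑ k, v k * Set.indicator (P k) (fun _ => (1:ℂ)) x) = v k₀ := by
          rw [Finset.sum_eq_single k₀]
          · simp [Set.indicator_of_mem hx2]
          · intro b _ hb
            have hnx : x ∉ P b := fun hxb =>
              (Set.disjoint_left.1 (hPdisj hb) hxb) hx2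
            simp [Set.indicator_of_notMem hnx]
          · intro h
            exact absurd (Finset.mem_univ k₀) h
        rw [← h5]
        exact hx1
      exact hk₀ (hconst_eq k₀ _ _ hval)
    have hWf₀ : W f₀ = 0 := by
      have hmap : W f₀ = ∑ k, v k • W (e k) := by
        rw [hf₀, map_sum]
        exact Finset.sum_congr rfl fun k _ => _root_.map_smul W (v k) (e k)
      rw [hmap]
      apply Lp.ext (μ := μ)
      have hl : ∀ l, ∀ᵐ x ∂(μ.restrict (P l)),
          (⇑(∑ k, v k • W (e k) : Lp ℂ ∞ μ)) x = 0 := by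
        intro l
        have hsumcoe := ae_restrict_of_ae (s := P l)
          (Lp_coeFn_finset_sum Finset.univ (fun k => v k • W (e k)))
        have hsm : ∀ k : Fin m, ⇑(v k • W (e k)) =ᵐ[μ.restrict (P l)]
            fun x => v k * (⇑(W (e k)) x) := by
          intro k
          filter_upwards [ae_restrict_of_ae (s := P l)
            (Lp.coeFn_smul (v k) (W (e k)))] with x hx
          rw [hx]
          simp
        filter_upwards [hsumcoe, ae_all_iff.2 hsm, ae_all_iff.2 fun k => ht k l]
          with x hx1 hx2 hx3
        rw [hx1]
        have : ∀ k ∈ Finset.univ, (⇑(v k • W (e k))) x = v k * t k l := by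
          intro k _
          rw [hx2 k, hx3 k]
        rw [Finset.sum_congr rfl this]
        have hmv := congrFun hvM l
        simp only [Matrix.mulVec, dotProduct, hM, Matrix.of_apply,
          Pi.zero_apply] at hmv
        rw [← hmv]
        exact Finset.sum_congr rfl fun k _ => mul_comm _ _
      have hcov : ∀ᵐ x ∂μ, x ∈ ⋃ j, P j := by
        have hc : μ ((⋃ j, P j)ᶜ) = 0 := by
          rw [Set.compl_eq_univ_diff]
          exact hPres
        exact hc
      have hl' : ∀ l, ∀ᵐ x ∂μ, x ∈ P l →
          (⇑(∑ k, v k • W (e k) : Lp ℂ ∞ μ)) x = 0 :=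
        fun l => (ae_restrict_iff' (hPmeas l)).1 (hl l)
      filter_upwards [hcov, ae_all_iff.2 hl', Lp.coeFn_zero ℂ ∞ μ] with x hx1 hx2 hx3
      obtain ⟨l, hlx⟩ := Set.mem_iUnion.1 hx1
      rw [hx2 l hlx, hx3]
      simp
    exact hf₀ne (hinj (by rw [hWf₀, map_zero]))
end
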